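/- (Ostrowski's theorem on stability of successive approximations.) Let (X,d) be a complete metric space and T : X → X a map satisfying d(Tx, Ty) ≤ α · d(x,y) for some α ∈ [0,1) and all x, y ∈ X; let p be the unique fixed point of T. Let (ε_k)_{k≥1} be a sequence of nonnegative real numbers and (y_k)_{k≥0} a sequence in X with y_0 = x_0 and d(y_k, T y_{k−1}) ≤ ε_k for all k ≥ 1. Then for every k ∈ ℕ, d(y_k, p) ≤ (α^k/(1−α)) · d(x_0, T x_0) + Σ_{i=1}^k α^{k−i} ε_i. In particular, if ε_k → 0 then y_k → p. -/
import Mathlib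
open Filter Finset

lemma geom_aux {r : ℝ} (hr0 : 0 ≤ r) (hr1 : r < 1) (n : ℕ) :
    ∑ j ∈ Finset.range n, r ^ j ≤ 1 / (1 - r) := by
  have h1 : (0:ℝ) < 1 - r := by linarith
  rw [geom_sum_eq (by intro h; rw [h] at hr1; linarith : r ≠ 1)]
  have e : (r ^ n - 1) / (r - 1) = (1 - r ^ n) / (1 - r) := by
    rw [← neg_div_neg_eq]; ring_nf
  rw [e]
  have : 0 ≤ r ^ n := pow_nonneg hr0 n
  gcongr
  linarith

lemma conv_aux {r : ℝ} (hr0 : 0 ≤ r) (hr1 : r < 1) {b : ℕ → ℝ} (hb0 : ∀ n, 0 ≤ b n)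
    (hb : Tendsto b atTop (nhds 0)) :
    Tendsto (fun n => ∑ l ∈ Finset.range n, r ^ (n - 1 - l) * b l) atTop (nhds 0) := by
  rw [Metric.tendsto_atTop]
  intro ε hε
  have h1 : (0:ℝ) < 1 - r := by linarith
  obtain ⟨N, hN⟩ := (Metric.tendsto_atTop.1 hb) (ε * (1 - r) / 4) (by positivity)
  set S : ℝ := ∑ l ∈ Finset.range N, r ^ (N - 1 - l) * b l with hS
  have hS0 : 0 ≤ S := Finset.sum_nonneg fun l _ => mul_nonneg (pow_nonneg hr0 _) (hb0 l)
  have hpow : Tendsto (fun n : ℕ => S * r ^ n) atTop (nhds 0) := by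
    simpa using (tendsto_pow_atTop_nhds_zero_of_lt_one hr0 hr1).const_mul S
  obtain ⟨M, hM⟩ := (Metric.tendsto_atTop.1 hpow) (ε / 2) (by positivity)
  refine ⟨N + M, fun n hn => ?_⟩
  have hNn : N ≤ n := le_trans (Nat.le_add_right _ _) hn
  have key : ∑ l ∈ Finset.range n, r ^ (n - 1 - l) * b l ≤ S * r ^ (n - N) + ε / 2 := by
    rw [← Finset.sum_range_add_sum_Ico _ hNn]
    have e1 : ∑ l ∈ Finset.range N, r ^ (n - 1 - l) * b l = S * r ^ (n - N) := by
      rw [hS, Finset.sum_mul]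
      refine Finset.sum_congr rfl fun l hl => ?_
      rw [Finset.mem_range] at hl
      rw [mul_right_comm, ← pow_add]
      congr 2
      omega
    rw [e1]
    gcongr
    have e2 : ∑ l ∈ Finset.Ico N n, r ^ (n - 1 - l) * b l
        ≤ ∑ l ∈ Finset.Ico N n, r ^ (n - 1 - l) * (ε * (1 - r) / 4) := by
      refine Finset.sum_le_sum fun l hl => ?_
      rw [Finset.mem_Ico] at hl
      have := hN l hl.1
      rw [Real.dist_eq, sub_zero] at this
      have := le_of_lt (lt_of_abs_lt this)
      exact mul_le_mul_of_nonneg_left this (pow_nonneg hr0 _)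
    refine e2.trans ?_
    rw [← Finset.sum_mul]
    have e3 : ∑ l ∈ Finset.Ico N n, r ^ (n - 1 - l) ≤ 1 / (1 - r) := by
      rw [Finset.sum_Ico_eq_sum_range]
      have : ∀ j ∈ Finset.range (n - N), r ^ (n - 1 - (N + j)) = r ^ ((n - N) - 1 - j) := by
        intro j hj; congr 1; omega
      rw [Finset.sum_congr rfl this, Finset.sum_range_reflect]
      exact geom_aux hr0 hr1 _
    calc (∑ l ∈ Finset.Ico N n, r ^ (n - 1 - l)) * (ε * (1 - r) / 4)
        ≤ (1 / (1 - r)) * (ε * (1 - r) / 4) := by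
          exact mul_le_mul_of_nonneg_right e3 (by positivity)
      _ ≤ ε / 2 := by rw [div_mul_eq_mul_div, one_mul]; rw [div_le_iff₀ h1] at *; nlinarith
  have hsum0 : 0 ≤ ∑ l ∈ Finset.range n, r ^ (n - 1 - l) * b l :=
    Finset.sum_nonneg fun l _ => mul_nonneg (pow_nonneg hr0 _) (hb0 l)
  rw [Real.dist_eq, sub_zero, abs_of_nonneg hsum0]
  have hM' := hM (n - N) (by omega)
  rw [Real.dist_eq, sub_zero] at hM'
  have := lt_of_abs_lt hM'
  linarith

/-- Ostrowski: stability of successive approximations for a Banach contraction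
`T` with factor `α ∈ [0, 1)` and unique fixed point `p`: if `y_0 = x_0` and
`d(y_k, T y_{k-1}) ≤ ε_k` for `k ≥ 1`, then
`d(y_k, p) ≤ (α^k / (1 - α)) d(x_0, T x_0) + ∑_{i=1}^{k} α^{k-i} ε_i`, and in particular
`y_k → p` whenever `ε_k → 0`. -/
theorem stmt18 {X : Type*} [MetricSpace X] [CompleteSpace X]
    (T : X → X) (α : ℝ) (hα0 : 0 ≤ α) (hα1 : α < 1)
    (hT : ∀ x y : X, dist (T x) (T y) ≤ α * dist x y)
    (p : X) (hp : T p = p)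
    (x₀ : X) (y : ℕ → X) (ε : ℕ → ℝ) (hε : ∀ i, 0 ≤ ε i)
    (hy0 : y 0 = x₀)
    (hyk : ∀ i : ℕ, dist (y (i + 1)) (T (y i)) ≤ ε (i + 1)) :
    (∀ i : ℕ, dist (y i) p ≤
      α ^ i / (1 - α) * dist x₀ (T x₀) +
        ∑ l ∈ Finset.range i, α ^ (i - 1 - l) * ε (l + 1)) ∧
    (Tendsto ε atTop (nhds 0) → Tendsto y atTop (nhds p)) := by
  have h1 : (0:ℝ) < 1 - α := by linarith
  -- d(x₀, p) ≤ d(x₀, Tx₀)/(1-α)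
  have hD : dist x₀ p ≤ dist x₀ (T x₀) / (1 - α) := by
    have h2 : dist x₀ p ≤ dist x₀ (T x₀) + dist (T x₀) p := dist_triangle _ _ _
    have h3 : dist (T x₀) p ≤ α * dist x₀ p := by
      calc dist (T x₀) p = dist (T x₀) (T p) := by rw [hp]
        _ ≤ α * dist x₀ p := hT _ _
    rw [le_div_iff₀ h1]
    linarith
  have main : ∀ i : ℕ, dist (y i) p ≤
      α ^ i * dist x₀ p + ∑ l ∈ Finset.range i, α ^ (i - 1 - l) * ε (l + 1) := by
    intro i
    induction i with
    | zero => simp [hy0]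
    | succ i ih =>
      have step : dist (y (i + 1)) p ≤ ε (i + 1) + α * dist (y i) p := by
        calc dist (y (i + 1)) p ≤ dist (y (i + 1)) (T (y i)) + dist (T (y i)) p :=
              dist_triangle _ _ _
          _ ≤ ε (i + 1) + α * dist (y i) p := by
              have : dist (T (y i)) p ≤ α * dist (y i) p := by
                calc dist (T (y i)) p = dist (T (y i)) (T p) := by rw [hp]
                  _ ≤ α * dist (y i) p := hT _ _
              linarith [hyk i]
      have hsum : ∑ l ∈ Finset.range (i + 1), α ^ (i + 1 - 1 - l) * ε (l + 1)
          = α * ∑ l ∈ Finset.range i, α ^ (i - 1 - l) * ε (l + 1) + ε (i + 1) := by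
        rw [Finset.sum_range_succ, Finset.mul_sum]
        congr 1
        · refine Finset.sum_congr rfl fun l hl => ?_
          rw [Finset.mem_range] at hl
          rw [← mul_assoc, ← pow_succ']
          congr 2
          omega
        · simp
      rw [hsum]
      have := mul_le_mul_of_nonneg_left ih hα0
      rw [pow_succ']
      nlinarith
  constructor
  · intro i
    refine (main i).trans ?_
    have : α ^ i * dist x₀ p ≤ α ^ i / (1 - α) * dist x₀ (T x₀) := by
      rw [div_mul_eq_mul_div, le_div_iff₀ h1]
      have hd : dist x₀ p * (1 - α) ≤ dist x₀ (T x₀) := by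
        rw [le_div_iff₀ h1] at hD; linarith
      nlinarith [pow_nonneg hα0 i]
    linarith
  · intro hεt
    rw [tendsto_iff_dist_tendsto_zero]
    have hb : Tendsto (fun l : ℕ => ε (l + 1)) atTop (nhds 0) :=
      hεt.comp (tendsto_add_atTop_nat 1)
    have hconv := conv_aux hα0 hα1 (fun l => hε (l + 1)) hb
    have hpow : Tendsto (fun i : ℕ => α ^ i * dist x₀ p) atTop (nhds 0) := by
      simpa using (tendsto_pow_atTop_nhds_zero_of_lt_one hα0 hα1).mul_const (dist x₀ p)
    have hg : Tendsto (fun i : ℕ => α ^ i * dist x₀ p +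
        ∑ l ∈ Finset.range i, α ^ (i - 1 - l) * ε (l + 1)) atTop (nhds 0) := by
      simpa using hpow.add hconv
    exact squeeze_zero (fun i => dist_nonneg) main hg
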